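/- Let K be a field, a, b natural numbers, m = a + b, and let σ be a permutation of {1,…,m} such that σ⁻¹ is strictly increasing on {1,…,a} and on {a+1,…,m}. Then the multiplication map (x, y) ↦ x·y from (P̄ P_σ N) × (P_σ⁻¹ U P_σ ∩ N̄) to GL_m(K) is injective, and its image is exactly the subset P̄ U P_σ of GL_m(K). -/

import Mathlib

/-- The permutation matrix `P_σ`, with `(P_σ)_{ij} = 1` iff `i = σ(j)`. -/
def permMat₄ (K : Type*) [Field K] {m : ℕ} (σ : Equiv.Perm (Fin m)) :
    Matrix (Fin m) (Fin m) K :=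
  Matrix.of fun i j => if i = σ j then 1 else 0

/-- Invertible block lower-triangular matrices: `g_{ij} = 0` whenever `i` is in the first
block and `j` in the second. -/
def IsBlockLower₄ (K : Type*) [Field K] (a b : ℕ)
    (p : Matrix (Fin (a + b)) (Fin (a + b)) K) : Prop :=
  IsUnit p ∧ ∀ i j : Fin (a + b), (i : ℕ) < a → a ≤ (j : ℕ) → p i j = 0

/-- Upper unitriangular matrices. -/
def IsUpperUnitri₄ (K : Type*) [Field K] {m : ℕ} (n : Matrix (Fin m) (Fin m) K) : Prop :=
  (∀ i, n i i = 1) ∧ ∀ i j : Fin m, (j : ℕ) < (i : ℕ) → n i j = 0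

/-- Lower unitriangular matrices. -/
def IsLowerUnitri₄ (K : Type*) [Field K] {m : ℕ} (n : Matrix (Fin m) (Fin m) K) : Prop :=
  (∀ i, n i i = 1) ∧ ∀ i j : Fin m, (i : ℕ) < (j : ℕ) → n i j = 0

/-- Block upper-unipotent matrices `1 + X` with `X_{ij} = 0` unless `i` is in the first
block and `j` in the second. -/
def IsBlockUpperUnip₄ (K : Type*) [Field K] (a b : ℕ)
    (u : Matrix (Fin (a + b)) (Fin (a + b)) K) : Prop :=
  (∀ i, u i i = 1) ∧
    ∀ i j : Fin (a + b), i ≠ j → ¬((i : ℕ) < a ∧ a ≤ (j : ℕ)) → u i j = 0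

section aux
variable {K : Type*} [Field K] {m : ℕ}

lemma permMat_mul_apply (σ : Equiv.Perm (Fin m)) (A : Matrix (Fin m) (Fin m) K) (i j : Fin m) :
    (permMat₄ K σ * A) i j = A (σ⁻¹ i) j := by
  rw [Matrix.mul_apply]
  rw [Finset.sum_eq_single (σ⁻¹ i)]
  · simp [permMat₄]
  · intro k _ hk
    have : i ≠ σ k := fun h => hk (by simp [h])
    simp [permMat₄, this]
  · simp

lemma mul_permMat_apply (σ : Equiv.Perm (Fin m)) (A : Matrix (Fin m) (Fin m) K) (i j : Fin m) :
    (A * permMat₄ K σ) i j = A i (σ j) := by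
  rw [Matrix.mul_apply]
  rw [Finset.sum_eq_single (σ j)]
  · simp [permMat₄]
  · intro k _ hk
    simp [permMat₄, hk]
  · simp

lemma permMat_mul_permMat (σ τ : Equiv.Perm (Fin m)) :
    permMat₄ K σ * permMat₄ K τ = permMat₄ K (σ * τ) := by
  ext i j
  rw [mul_permMat_apply]
  simp [permMat₄, Equiv.Perm.mul_apply]
  split_ifs with h <;> simp [h]

lemma permMat_one : permMat₄ K (1 : Equiv.Perm (Fin m)) = 1 := by
  ext i j
  simp [permMat₄, Matrix.one_apply, eq_comm]
  split_ifs with h <;> simp [h]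

lemma permMat_mul_inv (σ : Equiv.Perm (Fin m)) :
    permMat₄ K σ * permMat₄ K σ⁻¹ = 1 := by
  rw [permMat_mul_permMat, mul_inv_cancel, permMat_one]

lemma permMat_inv_mul (σ : Equiv.Perm (Fin m)) :
    permMat₄ K σ⁻¹ * permMat₄ K σ = 1 := by
  rw [permMat_mul_permMat, inv_mul_cancel, permMat_one]

end aux

section aux2
variable {K : Type*} [Field K] {a b : ℕ}

/-- strictly-block-upper support -/
def SB₄ (a : ℕ) {K : Type*} [Field K] {m : ℕ} (X : Matrix (Fin m) (Fin m) K) : Prop :=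
  ∀ i j : Fin m, X i j ≠ 0 → (i : ℕ) < a ∧ a ≤ (j : ℕ)

lemma SB₄.mul_eq_zero {X Y : Matrix (Fin (a+b)) (Fin (a+b)) K} (hX : SB₄ a X) (hY : SB₄ a Y) :
    X * Y = 0 := by
  ext i j
  rw [Matrix.mul_apply, Matrix.zero_apply]
  refine Finset.sum_eq_zero fun k _ => ?_
  by_cases h : X i k = 0
  · simp [h]
  by_cases h' : Y k j = 0
  · simp [h']
  exact absurd ((hY k j h').1) (not_lt.2 (hX i k h).2)

lemma one_add_mul_one_add {X Y : Matrix (Fin (a+b)) (Fin (a+b)) K} (hX : SB₄ a X) (hY : SB₄ a Y) :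
    (1 + X) * (1 + Y) = 1 + (X + Y) := by
  have := hX.mul_eq_zero hY
  rw [add_mul, mul_add, mul_add, one_mul, one_mul, mul_one, this, add_zero, add_assoc, add_comm Y X]

lemma one_add_mul_one_sub {X : Matrix (Fin (a+b)) (Fin (a+b)) K} (hX : SB₄ a X) :
    (1 + X) * (1 - X) = 1 := by
  have hX' : SB₄ a (-X) := fun i j h => hX i j (by simpa using h)
  have := one_add_mul_one_add hX hX'
  simpa [sub_eq_add_neg] using this

lemma one_sub_mul_one_add {X : Matrix (Fin (a+b)) (Fin (a+b)) K} (hX : SB₄ a X) :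
    (1 - X) * (1 + X) = 1 := by
  have hX' : SB₄ a (-X) := fun i j h => hX i j (by simpa using h)
  have := one_add_mul_one_add hX' hX
  simpa [sub_eq_add_neg] using this

lemma SB₄.isUnit_one_add {X : Matrix (Fin (a+b)) (Fin (a+b)) K} (hX : SB₄ a X) :
    IsUnit (1 + X) :=
  ⟨⟨1 + X, 1 - X, one_add_mul_one_sub hX, one_sub_mul_one_add hX⟩, rfl⟩

lemma unip_sub_one {u : Matrix (Fin (a+b)) (Fin (a+b)) K} (hu : IsBlockUpperUnip₄ K a b u) :
    SB₄ a (u - 1) := by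
  intro i j h
  by_contra hc
  apply h
  rcases eq_or_ne i j with rfl | hne
  · simp [hu.1 i]
  · simp [Matrix.one_apply_ne hne, hu.2 i j hne hc]

lemma sb_unip {X : Matrix (Fin (a+b)) (Fin (a+b)) K} (hX : SB₄ a X) :
    IsBlockUpperUnip₄ K a b (1 + X) := by
  constructor
  · intro i
    have : X i i = 0 := by
      by_contra h
      exact absurd ((hX i i h).2.trans_lt (hX i i h).1) (lt_irrefl _)
    simp [this]
  · intro i j hne hc
    have : X i j = 0 := by
      by_contra h
      exact hc (hX i j h)
    simp [Matrix.one_apply_ne hne, this]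

lemma SB₄.det_one_add {X : Matrix (Fin (a+b)) (Fin (a+b)) K} (hX : SB₄ a X) :
    (1 + X).det = 1 := by
  have ht : (1 + X).BlockTriangular id := by
    intro i j hij
    have hij' : (j : ℕ) < (i : ℕ) := hij
    have hne : i ≠ j := fun h => absurd (h ▸ hij) (lt_irrefl _)
    have hX0 : X i j = 0 := by
      by_contra h
      have h1 := (hX i j h).1
      have h2 := (hX i j h).2
      omega
    simp [Matrix.one_apply_ne hne, hX0]
  rw [Matrix.det_of_upperTriangular ht]
  have : ∀ i : Fin (a+b), X i i = 0 := by
    intro i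
    by_contra h
    have h1 := (hX i i h).1
    have h2 := (hX i i h).2
    omega
  simp [this]

lemma upperUnitri_det {n : Matrix (Fin (a+b)) (Fin (a+b)) K} (hn : IsUpperUnitri₄ K n) :
    n.det = 1 := by
  rw [Matrix.det_of_upperTriangular (fun i j hij => hn.2 i j hij)]
  simp [hn.1]

lemma lowerUnitri_det {n : Matrix (Fin (a+b)) (Fin (a+b)) K} (hn : IsLowerUnitri₄ K n) :
    n.det = 1 := by
  rw [Matrix.det_of_lowerTriangular n (fun i j hij => hn.2 i j hij)]
  simp [hn.1]

end aux2

section auxextra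
variable {K : Type*} [Field K] {a b : ℕ}

lemma SB₄.add {X Y : Matrix (Fin (a+b)) (Fin (a+b)) K} (hX : SB₄ a X) (hY : SB₄ a Y) :
    SB₄ a (X + Y) := by
  intro i j h
  by_cases hx : X i j = 0
  · by_cases hy : Y i j = 0
    · exact absurd (by rw [Matrix.add_apply, hx, hy, add_zero]) h
    · exact hY i j hy
  · exact hX i j hx

end auxextra

section aux3
variable {K : Type*} [Field K] {a b : ℕ}

def bl₄ (a b : ℕ) : Fin (a + b) → ℕ := fun i => if (i : ℕ) < a then 1 else 0

lemma blockLower_bt {p : Matrix (Fin (a+b)) (Fin (a+b)) K}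
    (hp : ∀ i j : Fin (a + b), (i : ℕ) < a → a ≤ (j : ℕ) → p i j = 0) :
    p.BlockTriangular (bl₄ a b) := by
  intro i j hij
  simp only [bl₄] at hij
  by_cases hi : (i : ℕ) < a
  · by_cases hj : (j : ℕ) < a
    · simp [hi, hj] at hij
    · exact hp i j hi (by omega)
  · by_cases hj : (j : ℕ) < a <;> simp [hi, hj] at hij
lemma bt_blockLower {p : Matrix (Fin (a+b)) (Fin (a+b)) K}
    (hp : p.BlockTriangular (bl₄ a b)) :
    ∀ i j : Fin (a + b), (i : ℕ) < a → a ≤ (j : ℕ) → p i j = 0 := by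
  intro i j hi hj
  exact hp (by simp [bl₄, hi, Nat.not_lt.2 hj])

lemma blockLower_mul {p q : Matrix (Fin (a+b)) (Fin (a+b)) K}
    (hp : IsBlockLower₄ K a b p) (hq : IsBlockLower₄ K a b q) :
    IsBlockLower₄ K a b (p * q) :=
  ⟨hp.1.mul hq.1, bt_blockLower ((blockLower_bt hp.2).mul (blockLower_bt hq.2))⟩

lemma blockLower_inv {p : Matrix (Fin (a+b)) (Fin (a+b)) K}
    (hp : IsBlockLower₄ K a b p) :
    IsBlockLower₄ K a b p⁻¹ ∧ p * p⁻¹ = 1 ∧ p⁻¹ * p = 1 := by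
  have hd : IsUnit p.det := (Matrix.isUnit_iff_isUnit_det p).1 hp.1
  haveI := p.invertibleOfIsUnitDet hd
  refine ⟨⟨?_, bt_blockLower (Matrix.blockTriangular_inv_of_blockTriangular (blockLower_bt hp.2))⟩,
    Matrix.mul_nonsing_inv p hd, Matrix.nonsing_inv_mul p hd⟩
  exact ⟨⟨p⁻¹, p, Matrix.nonsing_inv_mul p hd, Matrix.mul_nonsing_inv p hd⟩, rfl⟩

end aux3

section decomp
variable {K : Type*} [Field K] {a b : ℕ}

lemma decomp₄ (σ : Equiv.Perm (Fin (a+b)))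
    (h1 : StrictMonoOn (fun i => σ⁻¹ i) {i : Fin (a + b) | (i : ℕ) < a})
    {n : Matrix (Fin (a+b)) (Fin (a+b)) K} (hn : IsUpperUnitri₄ K n) :
    ∃ q V, IsBlockLower₄ K a b q ∧ SB₄ a V ∧
      (∀ i j, V i j ≠ 0 → σ⁻¹ i < σ⁻¹ j) ∧
      permMat₄ K σ * n * permMat₄ K σ⁻¹ = q * (1 + V) := by
  classical
  set M : Matrix (Fin (a+b)) (Fin (a+b)) K :=
    Matrix.of fun i j => n (σ⁻¹ i) (σ⁻¹ j) with hMdef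
  have hM : permMat₄ K σ * n * permMat₄ K σ⁻¹ = M := by
    ext i j
    rw [mul_permMat_apply, permMat_mul_apply]
    rfl
  -- monotonicity on the first block, in ℕ terms
  have h1' : ∀ i j : Fin (a+b), (i : ℕ) < a → (j : ℕ) < a → (j : ℕ) < (i : ℕ) →
      ((σ⁻¹ j : Fin (a+b)) : ℕ) < ((σ⁻¹ i : Fin (a+b)) : ℕ) := by
    intro i j hi hj hij
    exact h1 hj hi (by exact hij)
  set Mh : Matrix (Fin (a+b)) (Fin (a+b)) K :=
    Matrix.of fun i j => if (i : ℕ) < a then M i j else (1 : Matrix (Fin (a+b)) (Fin (a+b)) K) i j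
    with hMhdef
  set Mc : Matrix (Fin (a+b)) (Fin (a+b)) K :=
    Matrix.of fun i j => if (i : ℕ) < a ∧ a ≤ (j : ℕ) then 0 else Mh i j with hMcdef
  have hMh_apply : ∀ i j, Mh i j =
      if (i : ℕ) < a then M i j else (1 : Matrix (Fin (a+b)) (Fin (a+b)) K) i j := fun i j => rfl
  have hMc_apply : ∀ i j, Mc i j =
      if (i : ℕ) < a ∧ a ≤ (j : ℕ) then 0 else Mh i j := fun i j => rfl
  have hM_apply : ∀ i j, M i j = n (σ⁻¹ i) (σ⁻¹ j) := fun i j => rfl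
  have hMdiag : ∀ i, M i i = 1 := fun i => hn.1 _
  have hMblock1 : ∀ i j : Fin (a+b), (i : ℕ) < a → (j : ℕ) < a → (j : ℕ) < (i : ℕ) →
      M i j = 0 := by
    intro i j hi hj hij
    exact hn.2 _ _ (h1' i j hi hj hij)
  -- Mh is upper triangular with unit diagonal
  have hMhdiag : ∀ i, Mh i i = 1 := by
    intro i
    rw [hMh_apply]
    split
    · exact hMdiag i
    · simp
  have hMhtri : Mh.BlockTriangular id := by
    intro i j hij
    have hij' : (j : ℕ) < (i : ℕ) := hij
    rw [hMh_apply]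
    split
    · exact hMblock1 i j (by assumption) (by omega) hij'
    · exact Matrix.one_apply_ne (fun h => absurd (h ▸ hij) (lt_irrefl _))
  have hMctri : Mc.BlockTriangular id := by
    intro i j hij
    have hij' : (j : ℕ) < (i : ℕ) := hij
    rw [hMc_apply]
    split
    · rfl
    · exact hMhtri hij
  have hMcdiag : ∀ i, Mc i i = 1 := by
    intro i
    rw [hMc_apply]
    rw [if_neg (by omega)]
    exact hMhdiag i
  have dMh : Mh.det = 1 := by
    rw [Matrix.det_of_upperTriangular hMhtri]
    simp [hMhdiag]
  have dMc : Mc.det = 1 := by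
    rw [Matrix.det_of_upperTriangular hMctri]
    simp [hMcdiag]
  have hdMc : IsUnit Mc.det := by rw [dMc]; exact isUnit_one
  -- Mc is also triangular w.r.t. the σ-order on the first block
  set c : Fin (a+b) → ℕ := fun i =>
    if (i : ℕ) < a then ((σ⁻¹ i : Fin (a+b)) : ℕ) else (a+b) + (i : ℕ) with hcdef
  have hc : Mc.BlockTriangular c := by
    intro i j hij
    rw [hMc_apply, hMh_apply]
    by_cases hi : (i : ℕ) < a
    · by_cases hj : (j : ℕ) < a
      · rw [if_neg (by omega), if_pos hi]
        have hc1 : c i = ((σ⁻¹ i : Fin (a+b)) : ℕ) := by simp [hcdef, hi]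
        have hc2 : c j = ((σ⁻¹ j : Fin (a+b)) : ℕ) := by simp [hcdef, hj]
        exact hn.2 _ _ (by omega)
      · exfalso
        have h1 : c i = ((σ⁻¹ i : Fin (a+b)) : ℕ) := by simp [hcdef, hi]
        have h2 : c j = (a+b) + (j : ℕ) := by simp [hcdef, hj]
        have := (σ⁻¹ i).isLt
        omega
    · by_cases hj : (j : ℕ) < a
      · rw [if_neg (by omega), if_neg hi]
        exact Matrix.one_apply_ne (by intro h; subst h; omega)
      · rw [if_neg (by omega), if_neg hi]
        have h1 : c i = (a+b) + (i : ℕ) := by simp [hcdef, hi]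
        have h2 : c j = (a+b) + (j : ℕ) := by simp [hcdef, hj]
        have : (j : ℕ) < (i : ℕ) := by omega
        exact Matrix.one_apply_ne (by intro h; subst h; omega)
  haveI : Invertible Mc := Mc.invertibleOfIsUnitDet hdMc
  have hinv_tri : Mc⁻¹.BlockTriangular c := Matrix.blockTriangular_inv_of_blockTriangular hc
  -- rows of Mc (and Mc⁻¹) with index ≥ a are identity rows
  have hrow : ∀ i : Fin (a+b), a ≤ (i : ℕ) → ∀ k, Mc i k =
      (1 : Matrix (Fin (a+b)) (Fin (a+b)) K) i k := by
    intro i hi k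
    rw [hMc_apply, if_neg (by omega), hMh_apply, if_neg (by omega)]
  have hcol : ∀ k j : Fin (a+b), a ≤ (j : ℕ) → Mc k j =
      (1 : Matrix (Fin (a+b)) (Fin (a+b)) K) k j := by
    intro k j hj
    rw [hMc_apply]
    by_cases hk : (k : ℕ) < a
    · rw [if_pos ⟨hk, hj⟩]
      exact (Matrix.one_apply_ne (by intro h; subst h; omega)).symm
    · rw [if_neg (by omega), hMh_apply, if_neg hk]
  have hirow : ∀ i : Fin (a+b), a ≤ (i : ℕ) → ∀ j, Mc⁻¹ i j =
      (1 : Matrix (Fin (a+b)) (Fin (a+b)) K) i j := by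
    intro i hi j
    have key : (Mc * Mc⁻¹) i j = Mc⁻¹ i j := by
      rw [Matrix.mul_apply]
      calc ∑ k, Mc i k * Mc⁻¹ k j
          = ∑ k, (1 : Matrix (Fin (a+b)) (Fin (a+b)) K) i k * Mc⁻¹ k j :=
            Finset.sum_congr rfl fun k _ => by rw [hrow i hi k]
        _ = ((1 : Matrix (Fin (a+b)) (Fin (a+b)) K) * Mc⁻¹) i j := (Matrix.mul_apply).symm
        _ = Mc⁻¹ i j := by rw [Matrix.one_mul]
    rw [← key, Matrix.mul_nonsing_inv _ hdMc]
  have hicol : ∀ i j : Fin (a+b), a ≤ (j : ℕ) → Mc⁻¹ i j =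
      (1 : Matrix (Fin (a+b)) (Fin (a+b)) K) i j := by
    intro i j hj
    have key : (Mc⁻¹ * Mc) i j = Mc⁻¹ i j := by
      rw [Matrix.mul_apply]
      calc ∑ k, Mc⁻¹ i k * Mc k j
          = ∑ k, Mc⁻¹ i k * (1 : Matrix (Fin (a+b)) (Fin (a+b)) K) k j :=
            Finset.sum_congr rfl fun k _ => by rw [hcol k j hj]
        _ = (Mc⁻¹ * (1 : Matrix (Fin (a+b)) (Fin (a+b)) K)) i j := (Matrix.mul_apply).symm
        _ = Mc⁻¹ i j := by rw [Matrix.mul_one]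
    rw [← key, Matrix.nonsing_inv_mul _ hdMc]
  -- the unipotent factor
  set v : Matrix (Fin (a+b)) (Fin (a+b)) K := Mc⁻¹ * Mh with hvdef
  set V : Matrix (Fin (a+b)) (Fin (a+b)) K := v - 1 with hVdef
  have hv1 : ∀ i j : Fin (a+b), ¬((i : ℕ) < a ∧ a ≤ (j : ℕ)) → v i j =
      (1 : Matrix (Fin (a+b)) (Fin (a+b)) K) i j := by
    intro i j hij
    by_cases hi : (i : ℕ) < a
    · -- then j < a, and column j of Mh equals column j of Mc
      have hj : (j : ℕ) < a := by omega
      have key : v i j = (Mc⁻¹ * Mc) i j := by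
        rw [hvdef, Matrix.mul_apply, Matrix.mul_apply]
        refine Finset.sum_congr rfl fun k _ => ?_
        rw [hMc_apply, if_neg (by omega)]
      rw [key, Matrix.nonsing_inv_mul _ hdMc]
    · -- row i of Mc⁻¹ is an identity row
      have key : v i j = ((1 : Matrix (Fin (a+b)) (Fin (a+b)) K) * Mh) i j := by
        rw [hvdef, Matrix.mul_apply, Matrix.mul_apply]
        refine Finset.sum_congr rfl fun k _ => ?_
        rw [hirow i (by omega) k]
      rw [key, Matrix.one_mul, hMh_apply, if_neg hi]
  have hSBV : SB₄ a V := by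
    intro i j hV
    by_contra hc'
    apply hV
    rw [hVdef, Matrix.sub_apply, hv1 i j hc', sub_self]
  have hVσ : ∀ i j, V i j ≠ 0 → σ⁻¹ i < σ⁻¹ j := by
    intro i j hV
    obtain ⟨hia, haj⟩ := hSBV i j hV
    have hne : i ≠ j := by intro h; subst h; omega
    have hvij : v i j ≠ 0 := by
      intro h
      apply hV
      rw [hVdef, Matrix.sub_apply, h, Matrix.one_apply_ne hne, sub_zero]
    rw [hvdef, Matrix.mul_apply] at hvij
    obtain ⟨k, _, hk⟩ := Finset.exists_ne_zero_of_sum_ne_zero hvij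
    have hk1 : Mc⁻¹ i k ≠ 0 := fun h => hk (by rw [h, zero_mul])
    have hk2 : Mh k j ≠ 0 := fun h => hk (by rw [h, mul_zero])
    have hka : (k : ℕ) < a := by
      by_contra hka
      exact hk1 ((hicol i k (by omega)).trans
        (Matrix.one_apply_ne (by intro h; subst h; omega)))
    -- from triangularity of Mc⁻¹ w.r.t. c : σ⁻¹ i ≤ σ⁻¹ k
    have hik : ((σ⁻¹ i : Fin (a+b)) : ℕ) ≤ ((σ⁻¹ k : Fin (a+b)) : ℕ) := by
      by_contra hik
      apply hk1
      apply hinv_tri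
      have hc1 : c i = ((σ⁻¹ i : Fin (a+b)) : ℕ) := by simp [hcdef, hia]
      have hc2 : c k = ((σ⁻¹ k : Fin (a+b)) : ℕ) := by simp [hcdef, hka]
      omega
    -- from n upper triangular : σ⁻¹ k ≤ σ⁻¹ j
    have hkj : ((σ⁻¹ k : Fin (a+b)) : ℕ) ≤ ((σ⁻¹ j : Fin (a+b)) : ℕ) := by
      by_contra hkj
      apply hk2
      rw [hMh_apply, if_pos hka]
      exact hn.2 _ _ (by omega)
    have hnej : ((σ⁻¹ i : Fin (a+b)) : ℕ) ≠ ((σ⁻¹ j : Fin (a+b)) : ℕ) := by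
      intro h
      exact hne (σ⁻¹.injective (Fin.ext h))
    exact Fin.lt_def.2 (by omega)
  -- the block-lower factor
  set q : Matrix (Fin (a+b)) (Fin (a+b)) K := M * (1 - V) with hqdef
  have hqv : q * (1 + V) = M := by
    rw [hqdef, mul_assoc, one_sub_mul_one_add hSBV, mul_one]
  have hdetM : M.det = 1 := by
    have : M = n.submatrix (⇑(σ⁻¹ : Equiv.Perm (Fin (a+b)))) (⇑(σ⁻¹ : Equiv.Perm (Fin (a+b)))) :=
      rfl
    rw [this, Matrix.det_submatrix_equiv_self (σ⁻¹ : Equiv.Perm (Fin (a+b)))]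
    exact upperUnitri_det hn
  have hqunit : IsUnit q := by
    rw [Matrix.isUnit_iff_isUnit_det, hqdef, Matrix.det_mul, hdetM]
    have hSBV' : SB₄ a (-V) := fun i j h => hSBV i j (by simpa using h)
    have : (1 - V).det = 1 := by
      have : (1 : Matrix (Fin (a+b)) (Fin (a+b)) K) - V = 1 + (-V) := sub_eq_add_neg _ _
      rw [this]
      exact hSBV'.det_one_add
    rw [this, one_mul]
    exact isUnit_one
  have hqblock : ∀ i j : Fin (a+b), (i : ℕ) < a → a ≤ (j : ℕ) → q i j = 0 := by
    intro i j hi hj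
    have hMV : (M * V) i j = M i j := by
      have step1 : (M * V) i j = (Mc * V) i j := by
        rw [Matrix.mul_apply, Matrix.mul_apply]
        refine Finset.sum_congr rfl fun k _ => ?_
        by_cases hk : (k : ℕ) < a
        · rw [hMc_apply, if_neg (by omega), hMh_apply, if_pos hi]
        · have : V k j = 0 := by
            by_contra h
            exact hk (hSBV k j h).1
          rw [this, mul_zero, mul_zero]
      have step2 : Mc * V = Mh - Mc := by
        rw [hVdef, Matrix.mul_sub, Matrix.mul_one, hvdef,
          Matrix.mul_nonsing_inv_cancel_left _ _ hdMc]
      rw [step1, step2, Matrix.sub_apply, hMc_apply, if_pos ⟨hi, hj⟩, sub_zero,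
        hMh_apply, if_pos hi]
    rw [hqdef, Matrix.mul_sub, Matrix.mul_one, Matrix.sub_apply, hMV, sub_self]
  exact ⟨q, V, ⟨hqunit, hqblock⟩, hSBV, hVσ, by rw [hM, hqv]⟩

end decomp

/-- Over a field `K`, if `σ⁻¹` is strictly increasing on each of the two
blocks, then the multiplication map `(x, y) ↦ x * y` from `(P̄ P_σ N) × (P_σ⁻¹ U P_σ ∩ N̄)`
is injective with image exactly `P̄ U P_σ`. -/
theorem stmt_4 (K : Type*) [Field K] (a b : ℕ) (σ : Equiv.Perm (Fin (a + b)))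
    (h1 : StrictMonoOn (fun i => σ⁻¹ i) {i : Fin (a + b) | (i : ℕ) < a})
    (h2 : StrictMonoOn (fun i => σ⁻¹ i) {i : Fin (a + b) | a ≤ (i : ℕ)}) :
    Set.InjOn
      (fun x : Matrix (Fin (a + b)) (Fin (a + b)) K × Matrix (Fin (a + b)) (Fin (a + b)) K =>
        x.1 * x.2)
      ({x | ∃ p n, IsBlockLower₄ K a b p ∧ IsUpperUnitri₄ K n ∧
          x = p * permMat₄ K σ * n} ×ˢ
       {y | IsLowerUnitri₄ K y ∧ ∃ u, IsBlockUpperUnip₄ K a b u ∧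
          y = permMat₄ K σ⁻¹ * u * permMat₄ K σ}) ∧
    Set.image2 (· * ·)
      {x | ∃ p n, IsBlockLower₄ K a b p ∧ IsUpperUnitri₄ K n ∧
          x = p * permMat₄ K σ * n}
      {y | IsLowerUnitri₄ K y ∧ ∃ u, IsBlockUpperUnip₄ K a b u ∧
          y = permMat₄ K σ⁻¹ * u * permMat₄ K σ} =
      {z | ∃ p u, IsBlockLower₄ K a b p ∧ IsBlockUpperUnip₄ K a b u ∧
          z = p * u * permMat₄ K σ} := by

  classical
  have hww' : permMat₄ K σ * permMat₄ K σ⁻¹ = 1 := permMat_mul_inv σ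
  have hw'w : permMat₄ K σ⁻¹ * permMat₄ K σ = 1 := permMat_inv_mul σ
  have cancel : ∀ Z : Matrix (Fin (a+b)) (Fin (a+b)) K,
      permMat₄ K σ * (permMat₄ K σ⁻¹ * Z) = Z := fun Z => by
    rw [← mul_assoc, hww', one_mul]
  have hwu : IsUnit (permMat₄ K σ) := ⟨⟨_, _, hww', hw'w⟩, rfl⟩
  have hconj : ∀ (A : Matrix (Fin (a+b)) (Fin (a+b)) K) (p q : Fin (a+b)),
      (permMat₄ K σ⁻¹ * A * permMat₄ K σ) p q = A (σ p) (σ q) := by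
    intro A p q
    rw [mul_permMat_apply, permMat_mul_apply]
    simp
  have hsecond : ∀ y : Matrix (Fin (a+b)) (Fin (a+b)) K, IsLowerUnitri₄ K y →
      ∀ u, IsBlockUpperUnip₄ K a b u → y = permMat₄ K σ⁻¹ * u * permMat₄ K σ →
      ∀ i j, (u - 1) i j ≠ 0 → σ⁻¹ j < σ⁻¹ i := by
    intro y hy u hu hyw i j hX
    obtain ⟨hia, haj⟩ := unip_sub_one hu i j hX
    have hne : i ≠ j := fun h => by subst h; omega
    have huij : u i j ≠ 0 := by
      intro h
      apply hX
      rw [Matrix.sub_apply, h, Matrix.one_apply_ne hne, sub_zero]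
    by_contra hlt
    have hij : σ⁻¹ i < σ⁻¹ j := by
      rcases lt_trichotomy (σ⁻¹ i) (σ⁻¹ j) with h | h | h
      · exact h
      · exact absurd (σ⁻¹.injective h) hne
      · exact absurd h hlt
    have h0 := hy.2 (σ⁻¹ i) (σ⁻¹ j) hij
    rw [hyw, hconj] at h0
    simp only [Equiv.Perm.coe_inv, Equiv.apply_symm_apply] at h0
    exact huij h0
  have key : ∀ (p n u : Matrix (Fin (a+b)) (Fin (a+b)) K),
      (p * permMat₄ K σ * n) * (permMat₄ K σ⁻¹ * u * permMat₄ K σ) =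
        p * (permMat₄ K σ * n * permMat₄ K σ⁻¹) * u * permMat₄ K σ := by
    intro p n u
    simp only [mul_assoc]
  constructor
  · -- injectivity
    rintro ⟨x₁, y₁⟩ hmem₁ ⟨x₂, y₂⟩ hmem₂ heq
    obtain ⟨p₁, n₁, hp₁, hn₁, hx₁⟩ := hmem₁.1
    obtain ⟨hy₁low, u₁, hu₁, hy₁⟩ := hmem₁.2
    obtain ⟨p₂, n₂, hp₂, hn₂, hx₂⟩ := hmem₂.1
    obtain ⟨hy₂low, u₂, hu₂, hy₂⟩ := hmem₂.2
    dsimp only at hx₁ hy₁ hx₂ hy₂ hy₁low hy₂low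
    simp only at heq
    obtain ⟨q₁, V₁, hq₁, hV₁, hV₁σ, hd₁⟩ := decomp₄ σ h1 hn₁
    obtain ⟨q₂, V₂, hq₂, hV₂, hV₂σ, hd₂⟩ := decomp₄ σ h1 hn₂
    have hSBX₁ : SB₄ a (u₁ - 1) := unip_sub_one hu₁
    have hSBX₂ : SB₄ a (u₂ - 1) := unip_sub_one hu₂
    have hX₁σ := hsecond y₁ hy₁low u₁ hu₁ hy₁
    have hX₂σ := hsecond y₂ hy₂low u₂ hu₂ hy₂
    have hu₁e : u₁ = 1 + (u₁ - 1) := by abel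
    have hu₂e : u₂ = 1 + (u₂ - 1) := by abel
    have heq2 : p₁ * (q₁ * (1 + V₁)) * u₁ = p₂ * (q₂ * (1 + V₂)) * u₂ := by
      apply hwu.mul_right_cancel
      rw [hx₁, hy₁, hx₂, hy₂, key, key, hd₁, hd₂] at heq
      exact heq
    have E : (p₁ * q₁) * (1 + (V₁ + (u₁ - 1))) = (p₂ * q₂) * (1 + (V₂ + (u₂ - 1))) := by
      rw [← one_add_mul_one_add hV₁ hSBX₁, ← one_add_mul_one_add hV₂ hSBX₂]
      calc (p₁ * q₁) * ((1 + V₁) * (1 + (u₁ - 1)))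
          = p₁ * (q₁ * (1 + V₁)) * u₁ := by rw [← hu₁e]; simp only [mul_assoc]
        _ = p₂ * (q₂ * (1 + V₂)) * u₂ := heq2
        _ = (p₂ * q₂) * ((1 + V₂) * (1 + (u₂ - 1))) := by rw [← hu₂e]; simp only [mul_assoc]
    have hP₁ : IsBlockLower₄ K a b (p₁ * q₁) := blockLower_mul hp₁ hq₁
    have hP₂ : IsBlockLower₄ K a b (p₂ * q₂) := blockLower_mul hp₂ hq₂
    obtain ⟨hP₂inv, hP₂mul, hP₂invmul⟩ := blockLower_inv hP₂
    have hS₁ : SB₄ a (V₁ + (u₁ - 1)) := hV₁.add hSBX₁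
    have hS₂ : SB₄ a (V₂ + (u₂ - 1)) := hV₂.add hSBX₂
    have hS₁' : SB₄ a (-(V₁ + (u₁ - 1))) := fun i j h =>
      hS₁ i j fun h0 => h (by rw [Matrix.neg_apply, h0, neg_zero])
    have hR : (p₂ * q₂)⁻¹ * (p₁ * q₁) = 1 + ((V₂ + (u₂ - 1)) + -(V₁ + (u₁ - 1))) := by
      have step : ((p₂ * q₂)⁻¹ * (p₁ * q₁)) * (1 + (V₁ + (u₁ - 1))) =
          1 + (V₂ + (u₂ - 1)) := by
        rw [mul_assoc, E, ← mul_assoc, hP₂invmul, one_mul]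
      calc (p₂ * q₂)⁻¹ * (p₁ * q₁)
          = ((p₂ * q₂)⁻¹ * (p₁ * q₁)) * ((1 + (V₁ + (u₁ - 1))) * (1 - (V₁ + (u₁ - 1)))) := by
            rw [one_add_mul_one_sub hS₁, mul_one]
        _ = (1 + (V₂ + (u₂ - 1))) * (1 - (V₁ + (u₁ - 1))) := by rw [← mul_assoc, step]
        _ = 1 + ((V₂ + (u₂ - 1)) + -(V₁ + (u₁ - 1))) := by
            rw [sub_eq_add_neg (1 : Matrix (Fin (a+b)) (Fin (a+b)) K) (V₁ + (u₁ - 1))]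
            exact one_add_mul_one_add hS₂ hS₁'
    have hRlow : IsBlockLower₄ K a b ((p₂ * q₂)⁻¹ * (p₁ * q₁)) := blockLower_mul hP₂inv hP₁
    have hSeq : V₁ + (u₁ - 1) = V₂ + (u₂ - 1) := by
      ext i j
      by_cases hbl : (i : ℕ) < a ∧ a ≤ (j : ℕ)
      · have hne : i ≠ j := fun h => by subst h; omega
        have h0 : ((p₂ * q₂)⁻¹ * (p₁ * q₁)) i j = 0 := hRlow.2 i j hbl.1 hbl.2
        rw [hR, Matrix.add_apply, Matrix.one_apply_ne hne, zero_add, Matrix.add_apply,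
          Matrix.neg_apply] at h0
        have h2 : (V₂ + (u₂ - 1)) i j - (V₁ + (u₁ - 1)) i j = 0 := by
          rw [sub_eq_add_neg]; exact h0
        exact (sub_eq_zero.mp h2).symm
      · have e1 : (V₁ + (u₁ - 1)) i j = 0 := by
          by_contra h; exact hbl (hS₁ i j h)
        have e2 : (V₂ + (u₂ - 1)) i j = 0 := by
          by_contra h; exact hbl (hS₂ i j h)
        rw [e1, e2]
    have hXeq : u₁ - 1 = u₂ - (1 : Matrix (Fin (a+b)) (Fin (a+b)) K) := by
      ext i j
      have hS : V₁ i j + (u₁ - 1) i j = V₂ i j + (u₂ - 1) i j := by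
        have h := congrFun (congrFun hSeq i) j
        simpa [Matrix.add_apply] using h
      by_cases hx1 : (u₁ - 1) i j = 0
      · by_cases hx2 : (u₂ - 1) i j = 0
        · rw [hx1, hx2]
        · have hlt := hX₂σ i j hx2
          have hv1 : V₁ i j = 0 := by
            by_contra h; exact absurd (hV₁σ i j h) (asymm hlt)
          have hv2 : V₂ i j = 0 := by
            by_contra h; exact absurd (hV₂σ i j h) (asymm hlt)
          rw [hv1, hv2, zero_add, zero_add] at hS
          exact hS
      · have hlt := hX₁σ i j hx1
        have hv1 : V₁ i j = 0 := by
          by_contra h; exact absurd (hV₁σ i j h) (asymm hlt)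
        have hv2 : V₂ i j = 0 := by
          by_contra h; exact absurd (hV₂σ i j h) (asymm hlt)
        rw [hv1, hv2, zero_add, zero_add] at hS
        exact hS
    have huu : u₁ = u₂ := by
      have h := congrArg (fun X => X + (1 : Matrix (Fin (a+b)) (Fin (a+b)) K)) hXeq
      simpa using h
    have hyy : y₁ = y₂ := by rw [hy₁, hy₂, huu]
    have hy₁u : IsUnit y₁ := by
      rw [Matrix.isUnit_iff_isUnit_det, lowerUnitri_det hy₁low]
      exact isUnit_one
    have hxx : x₁ = x₂ := by
      apply hy₁u.mul_right_cancel
      rw [heq, hyy]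
    rw [Prod.ext_iff]
    exact ⟨hxx, hyy⟩
  · -- image description
    ext z
    simp only [Set.mem_image2, Set.mem_setOf_eq]
    constructor
    · rintro ⟨x, ⟨p, n, hp, hn, rfl⟩, y, ⟨hylow, u, hu, rfl⟩, rfl⟩
      obtain ⟨q, V, hq, hV, hVσ, hd⟩ := decomp₄ σ h1 hn
      have hSBX : SB₄ a (u - 1) := unip_sub_one hu
      refine ⟨p * q, 1 + (V + (u - 1)), blockLower_mul hp hq, sb_unip (hV.add hSBX), ?_⟩
      rw [key, hd]
      calc p * (q * (1 + V)) * u * permMat₄ K σ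
          = (p * q) * ((1 + V) * (1 + (u - 1))) * permMat₄ K σ := by
            rw [show (1 : Matrix (Fin (a+b)) (Fin (a+b)) K) + (u - 1) = u by abel]
            simp only [mul_assoc]
        _ = p * q * (1 + (V + (u - 1))) * permMat₄ K σ := by
            rw [one_add_mul_one_add hV hSBX]
    · rintro ⟨p, u, hp, hu, rfl⟩
      have hSBX : SB₄ a (u - 1) := unip_sub_one hu
      set Xp : Matrix (Fin (a+b)) (Fin (a+b)) K :=
        Matrix.of fun i j => if σ⁻¹ i < σ⁻¹ j then (u - 1) i j else 0 with hXpdef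
      set Xm : Matrix (Fin (a+b)) (Fin (a+b)) K := (u - 1) - Xp with hXmdef
      have hXp_apply : ∀ i j, Xp i j = if σ⁻¹ i < σ⁻¹ j then (u - 1) i j else 0 :=
        fun i j => rfl
      have hSBXp : SB₄ a Xp := by
        intro i j h
        refine hSBX i j fun h0 => h ?_
        rw [hXp_apply, h0, ite_self]
      have hSBXm : SB₄ a Xm := by
        intro i j h
        refine hSBX i j fun h0 => h ?_
        rw [hXmdef, Matrix.sub_apply, h0, hXp_apply, h0, ite_self, sub_zero]
      have hXsum : Xp + Xm = u - 1 := by rw [hXmdef]; abel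
      have hsplit : (1 + Xp) * (1 + Xm) = u := by
        rw [one_add_mul_one_add hSBXp hSBXm, hXsum]
        abel
      have hnup : IsUpperUnitri₄ K (permMat₄ K σ⁻¹ * (1 + Xp) * permMat₄ K σ) := by
        constructor
        · intro i
          rw [hconj, Matrix.add_apply, Matrix.one_apply_eq, hXp_apply,
            if_neg (lt_irrefl _), add_zero]
        · intro i j hij
          have hne : σ i ≠ σ j := fun h => by
            have h' := σ.injective h
            subst h'
            omega
          rw [hconj, Matrix.add_apply, Matrix.one_apply_ne hne, hXp_apply, zero_add]
          refine if_neg ?_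
          simp only [Equiv.Perm.coe_inv, Equiv.symm_apply_apply]
          intro h
          have := Fin.lt_def.1 h
          omega
      have hylow' : IsLowerUnitri₄ K (permMat₄ K σ⁻¹ * (1 + Xm) * permMat₄ K σ) := by
        constructor
        · intro i
          have hXm0 : Xm (σ i) (σ i) = 0 := by
            rw [hXmdef, Matrix.sub_apply, hXp_apply, if_neg (lt_irrefl _), sub_zero,
              Matrix.sub_apply, hu.1, Matrix.one_apply_eq, sub_self]
          rw [hconj, Matrix.add_apply, Matrix.one_apply_eq, hXm0, add_zero]
        · intro i j hij
          have hne : σ i ≠ σ j := fun h => by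
            have h' := σ.injective h
            subst h'
            omega
          have hcond : σ⁻¹ (σ i) < σ⁻¹ (σ j) := by
            simp only [Equiv.Perm.coe_inv, Equiv.symm_apply_apply]
            exact Fin.lt_def.2 hij
          have hXm0 : Xm (σ i) (σ j) = 0 := by
            rw [hXmdef, Matrix.sub_apply, hXp_apply, if_pos hcond, sub_self]
          rw [hconj, Matrix.add_apply, Matrix.one_apply_ne hne, hXm0, add_zero]
      refine ⟨p * permMat₄ K σ * (permMat₄ K σ⁻¹ * (1 + Xp) * permMat₄ K σ),
        ⟨p, _, hp, hnup, rfl⟩,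
        permMat₄ K σ⁻¹ * (1 + Xm) * permMat₄ K σ,
        ⟨hylow', 1 + Xm, sb_unip hSBXm, rfl⟩, ?_⟩
      have hmid : permMat₄ K σ * (permMat₄ K σ⁻¹ * (1 + Xp) * permMat₄ K σ) *
          permMat₄ K σ⁻¹ = 1 + Xp := by
        simp only [mul_assoc]
        rw [cancel, hww', mul_one]
      show (p * permMat₄ K σ * (permMat₄ K σ⁻¹ * (1 + Xp) * permMat₄ K σ)) *
          (permMat₄ K σ⁻¹ * (1 + Xm) * permMat₄ K σ) = p * u * permMat₄ K σ
      rw [key, hmid, mul_assoc p (1 + Xp) (1 + Xm), hsplit]
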